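/- In B_{m,n}(q,t), for all integers i, k with 1 ≤ i, i + 1 ≤ k ≤ min{m,n}, and such that the generator H_{-(i+1)} exists (i.e. i + 1 ≤ m − 1), one has e_i H_{-(i+1)} H_{-i} e_k = t · ((t − t⁻¹)/(q − q⁻¹))^{i−1} · H_{-(i+1)} e_k. -/

import Mathlib

open scoped Classical

noncomputable section

/-- The field `ℚ(q,t)` of rational functions in two indeterminates over `ℚ`. -/
abbrev KK : Type := FractionRing (MvPolynomial (Fin 2) ℚ)

/-- The indeterminate `q` viewed inside `ℚ(q,t)`. -/
def qv : KK := algebraMap (MvPolynomial (Fin 2) ℚ) KK (MvPolynomial.X 0)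

/-- The indeterminate `t` viewed inside `ℚ(q,t)`. -/
def tv : KK := algebraMap (MvPolynomial (Fin 2) ℚ) KK (MvPolynomial.X 1)

/-- The valid indices `i` for the generators `H i` of `B_{m,n}(q,t)`:
`1 ≤ i ≤ n - 1` or `1 ≤ -i ≤ m - 1`. -/
def validIdx (m n : ℕ) (i : ℤ) : Prop :=
  (1 ≤ i ∧ i ≤ (n : ℤ) - 1) ∨ (1 ≤ -i ∧ -i ≤ (m : ℤ) - 1)

/-- Generators of the quantized walled Brauer algebra `B_{m,n}(q,t)`. -/
inductive WBgen (m n : ℕ) : Type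
  | H (i : ℤ) (h : validIdx m n i) : WBgen m n
  | E : WBgen m n

/-- The generator `H i` in the free algebra. -/
def fH (m n : ℕ) (i : ℤ) (h : validIdx m n i) : FreeAlgebra KK (WBgen m n) :=
  FreeAlgebra.ι KK (WBgen.H i h)

/-- The generator `e` in the free algebra. -/
def fE (m n : ℕ) : FreeAlgebra KK (WBgen m n) := FreeAlgebra.ι KK WBgen.E

/-- The element `H i - (q - q⁻¹)`, which becomes the inverse of `H i` in the quotient. -/
def fHinv (m n : ℕ) (i : ℤ) (h : validIdx m n i) : FreeAlgebra KK (WBgen m n) :=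
  fH m n i h - algebraMap KK _ (qv - qv⁻¹)

/-- The defining relations of the quantized walled Brauer algebra `B_{m,n}(q,t)`. -/
inductive WBrel (m n : ℕ) :
    FreeAlgebra KK (WBgen m n) → FreeAlgebra KK (WBgen m n) → Prop
  | quad (i : ℤ) (h : validIdx m n i) :
      WBrel m n ((fH m n i h - algebraMap KK _ qv) * (fH m n i h + algebraMap KK _ qv⁻¹)) 0
  | comm (i : ℤ) (hi : validIdx m n i) (j : ℤ) (hj : validIdx m n j) (hij : 1 < |i - j|) :
      WBrel m n (fH m n i hi * fH m n j hj) (fH m n j hj * fH m n i hi)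
  | braid (i : ℤ) (hi : validIdx m n i) (hi1 : validIdx m n (i + 1)) :
      WBrel m n (fH m n i hi * fH m n (i + 1) hi1 * fH m n i hi)
        (fH m n (i + 1) hi1 * fH m n i hi * fH m n (i + 1) hi1)
  | commE (i : ℤ) (hi : validIdx m n i) (h2 : 2 ≤ |i|) :
      WBrel m n (fH m n i hi * fE m n) (fE m n * fH m n i hi)
  | eHe (i : ℤ) (hi : validIdx m n i) (h : i = 1 ∨ i = -1) :
      WBrel m n (fE m n * fH m n i hi * fE m n) (algebraMap KK _ tv * fE m n)
  | esq : WBrel m n (fE m n * fE m n)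
      (algebraMap KK _ ((tv - tv⁻¹) / (qv - qv⁻¹)) * fE m n)
  | rel7 (h1 : validIdx m n 1) (hm : validIdx m n (-1)) :
      WBrel m n (fE m n * fHinv m n (-1) hm * fH m n 1 h1 * fE m n * fH m n (-1) hm)
        (fE m n * fHinv m n (-1) hm * fH m n 1 h1 * fE m n * fH m n 1 h1)
  | rel8 (h1 : validIdx m n 1) (hm : validIdx m n (-1)) :
      WBrel m n (fH m n (-1) hm * fE m n * fHinv m n (-1) hm * fH m n 1 h1 * fE m n)
        (fH m n 1 h1 * fE m n * fHinv m n (-1) hm * fH m n 1 h1 * fE m n)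

/-- The quantized walled Brauer algebra `B_{m,n}(q,t)`. -/
abbrev WB (m n : ℕ) : Type := RingQuot (WBrel m n)

/-- The generator `H i` of `B_{m,n}(q,t)`. -/
def HB (m n : ℕ) (i : ℤ) (h : validIdx m n i) : WB m n :=
  RingQuot.mkAlgHom KK (WBrel m n) (fH m n i h)

/-- The generator `e` of `B_{m,n}(q,t)`. -/
def EB (m n : ℕ) : WB m n := RingQuot.mkAlgHom KK (WBrel m n) (fE m n)

/-- The inverse `H i⁻¹ = H i - (q - q⁻¹)` of the generator `H i`. -/
def HBinv (m n : ℕ) (i : ℤ) (h : validIdx m n i) : WB m n :=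
  HB m n i h - algebraMap KK _ (qv - qv⁻¹)

/-- Total version of `H i` (equal to `H i` for valid `i`, junk value `1` otherwise). -/
def Htil (m n : ℕ) (i : ℤ) : WB m n :=
  if h : validIdx m n i then HB m n i h else 1

/-- Total version of `H i⁻¹` (equal to `H i⁻¹` for valid `i`, junk value `1` otherwise). -/
def Htilinv (m n : ℕ) (i : ℤ) : WB m n :=
  if h : validIdx m n i then HBinv m n i h else 1

/-- The elements `e_k`:  `e_0 = 1`, `e_1 = e`, and
`e_{k+1} = e ⬝ H_{-1}⁻¹ H_{-2}⁻¹ ⋯ H_{-k}⁻¹ ⬝ H_1 H_2 ⋯ H_k ⬝ e_k`. -/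
def ek (m n : ℕ) : ℕ → WB m n
  | 0 => 1
  | k + 1 =>
      EB m n *
        (((List.range k).map (fun j => Htilinv m n (-((j + 1 : ℕ) : ℤ)))).prod) *
        (((List.range k).map (fun j => Htil m n ((j + 1 : ℕ) : ℤ))).prod) *
        ek m n k

-- chunk 1: basic facts
section Aux
variable {m n : ℕ}

lemma qv_ne_zero : qv ≠ 0 := by
  unfold qv
  intro h
  have := (map_eq_zero_iff _ (IsFractionRing.injective (MvPolynomial (Fin 2) ℚ) KK)).mp h
  exact MvPolynomial.X_ne_zero _ this

lemma mk_rel {a b : FreeAlgebra KK (WBgen m n)} (h : WBrel m n a b) :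
    RingQuot.mkAlgHom KK (WBrel m n) a = RingQuot.mkAlgHom KK (WBrel m n) b :=
  RingQuot.mkAlgHom_rel KK h

lemma amap_central (c : KK) (x : WB m n) :
    algebraMap KK (WB m n) c * x = x * algebraMap KK (WB m n) c :=
  Algebra.commutes c x

/-- quadratic relation: H^2 = (q - q⁻¹) H + 1 -/
lemma HB_sq (i : ℤ) (h : validIdx m n i) :
    HB m n i h * HB m n i h = algebraMap KK (WB m n) (qv - qv⁻¹) * HB m n i h + 1 := by
  have h0 := mk_rel (WBrel.quad i h (m := m) (n := n))
  simp only [map_mul, map_sub, map_add, map_zero, AlgHom.commutes] at h0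
  have hq : algebraMap KK (WB m n) qv * algebraMap KK (WB m n) qv⁻¹ = 1 := by
    rw [← map_mul, mul_inv_cancel₀ qv_ne_zero, map_one]
  set H : WB m n := RingQuot.mkAlgHom KK (WBrel m n) (fH m n i h) with hH
  have hHB : HB m n i h = H := rfl
  set a : WB m n := algebraMap KK (WB m n) qv with ha
  set b : WB m n := algebraMap KK (WB m n) qv⁻¹ with hb
  have hbc : b * H = H * b := amap_central _ _
  have h1 : H * H + H * b - (a * H + 1) = 0 := by
    calc H * H + H * b - (a * H + 1)
        = (H * H + H * b) - (a * H + a * b) := by rw [hq]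
      _ = (H - a) * (H + b) := by
          rw [sub_mul H a (H + b), mul_add H H b, mul_add a H b]
      _ = 0 := h0
  have h2 : H * H = a * H - b * H + 1 := by
    calc H * H = (H * H + H * b - (a * H + 1)) + (a * H - H * b + 1) := by abel
      _ = 0 + (a * H - H * b + 1) := by rw [h1]
      _ = a * H - H * b + 1 := by abel
      _ = a * H - b * H + 1 := by rw [hbc]
  rw [hHB, h2, map_sub]
  rw [sub_mul a b H]

lemma HB_mul_HBinv (i : ℤ) (h : validIdx m n i) :
    HB m n i h * HBinv m n i h = 1 := by
  have hsq := HB_sq i h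
  set c : WB m n := algebraMap KK (WB m n) (qv - qv⁻¹) with hcc
  have hc : c * HB m n i h = HB m n i h * c := amap_central _ _
  set H := HB m n i h with hHH
  show H * (H - c) = 1
  calc H * (H - c) = H * H - H * c := mul_sub H H c
    _ = c * H + 1 - H * c := by rw [hsq]
    _ = H * c + 1 - H * c := by rw [hc]
    _ = 1 := by abel

lemma HBinv_mul_HB (i : ℤ) (h : validIdx m n i) :
    HBinv m n i h * HB m n i h = 1 := by
  have hsq := HB_sq i h
  set c : WB m n := algebraMap KK (WB m n) (qv - qv⁻¹) with hcc
  set H := HB m n i h with hHH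
  show (H - c) * H = 1
  calc (H - c) * H = H * H - c * H := sub_mul H c H
    _ = c * H + 1 - c * H := by rw [hsq]
    _ = 1 := by abel

lemma Htil_mul_Htilinv (i : ℤ) : Htil m n i * Htilinv m n i = 1 := by
  unfold Htil Htilinv
  by_cases h : validIdx m n i
  · simp only [dif_pos h]; exact HB_mul_HBinv i h
  · simp [dif_neg h]

lemma Htilinv_mul_Htil (i : ℤ) : Htilinv m n i * Htil m n i = 1 := by
  unfold Htil Htilinv
  by_cases h : validIdx m n i
  · simp only [dif_pos h]; exact HBinv_mul_HB i h
  · simp [dif_neg h]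

end Aux
-- chunk 2: relations, commutes, braid variants
section Aux2
variable {m n : ℕ}

/-- scalar δ -/
def dA (m n : ℕ) : WB m n := algebraMap KK (WB m n) ((tv - tv⁻¹) / (qv - qv⁻¹))
/-- scalar t -/
def tA (m n : ℕ) : WB m n := algebraMap KK (WB m n) tv

lemma Htil_valid {i : ℤ} (h : validIdx m n i) : Htil m n i = HB m n i h := dif_pos h
lemma Htilinv_valid {i : ℤ} (h : validIdx m n i) : Htilinv m n i = HBinv m n i h := dif_pos h

lemma commute_Htil_Htil {a b : ℤ} (hab : 2 ≤ |a - b|) :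
    Commute (Htil m n a) (Htil m n b) := by
  by_cases ha : validIdx m n a
  · by_cases hb : validIdx m n b
    · rw [Htil_valid ha, Htil_valid hb]
      have h0 := mk_rel (WBrel.comm a ha b hb (by omega))
      simp only [map_mul] at h0
      exact h0
    · have hb1 : Htil m n b = 1 := dif_neg hb
      rw [hb1]; exact Commute.one_right _
  · have ha1 : Htil m n a = 1 := dif_neg ha
    rw [ha1]; exact Commute.one_left _

lemma commute_Htilinv_right {a : ℤ} {x : WB m n} (h : Commute x (Htil m n a)) :
    Commute x (Htilinv m n a) := by
  by_cases ha : validIdx m n a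
  · rw [Htilinv_valid ha]
    rw [Htil_valid ha] at h
    show _ = _
    unfold HBinv
    calc x * (HB m n a ha - algebraMap KK (WB m n) (qv - qv⁻¹))
        = x * HB m n a ha - x * algebraMap KK (WB m n) (qv - qv⁻¹) := mul_sub x (HB m n a ha) (algebraMap KK (WB m n) (qv - qv⁻¹))
      _ = HB m n a ha * x - algebraMap KK (WB m n) (qv - qv⁻¹) * x := by
          rw [h.eq, ← amap_central]
      _ = (HB m n a ha - algebraMap KK (WB m n) (qv - qv⁻¹)) * x := (sub_mul (HB m n a ha) (algebraMap KK (WB m n) (qv - qv⁻¹)) x).symm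
  · have ha1 : Htilinv m n a = 1 := dif_neg ha
    rw [ha1]; exact Commute.one_right _

lemma commute_E_Htil {a : ℤ} (h2 : 2 ≤ |a|) : Commute (EB m n) (Htil m n a) := by
  by_cases ha : validIdx m n a
  · rw [Htil_valid ha]
    have h0 := mk_rel (WBrel.commE a ha h2)
    simp only [map_mul] at h0
    exact h0.symm
  · have ha1 : Htil m n a = 1 := dif_neg ha
    rw [ha1]; exact Commute.one_right _

lemma esq_eq : EB m n * EB m n = dA m n * EB m n := by
  have h0 := mk_rel (WBrel.esq (m := m) (n := n))
  simp only [map_mul, AlgHom.commutes] at h0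
  exact h0

lemma eHe_eq {i : ℤ} (hi : validIdx m n i) (h : i = 1 ∨ i = -1) :
    EB m n * Htil m n i * EB m n = tA m n * EB m n := by
  rw [Htil_valid hi]
  have h0 := mk_rel (WBrel.eHe i hi h)
  simp only [map_mul, AlgHom.commutes] at h0
  exact h0

lemma braid_eq {i : ℤ} (hi : validIdx m n i) (hi1 : validIdx m n (i + 1)) :
    Htil m n i * Htil m n (i + 1) * Htil m n i
      = Htil m n (i + 1) * Htil m n i * Htil m n (i + 1) := by
  rw [Htil_valid hi, Htil_valid hi1]
  have h0 := mk_rel (WBrel.braid i hi hi1)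
  simp only [map_mul] at h0
  exact h0

-- group braid variants
private lemma gbraid₁ {G : Type*} [Group G] {A B : G} (h : A * B * A = B * A * B) :
    B * A⁻¹ * B⁻¹ = A⁻¹ * B⁻¹ * A := by
  have e2 : A * B * A⁻¹ = B⁻¹ * A * B := by
    calc A * B * A⁻¹ = B⁻¹ * (B * A * B) * A⁻¹ := by group
      _ = B⁻¹ * (A * B * A) * A⁻¹ := by rw [h]
      _ = B⁻¹ * A * B := by group
  calc B * A⁻¹ * B⁻¹ = A⁻¹ * (A * B * A⁻¹) * B⁻¹ := by group
    _ = A⁻¹ * (B⁻¹ * A * B) * B⁻¹ := by rw [e2]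
    _ = A⁻¹ * B⁻¹ * A := by group

private lemma gbraid₂ {G : Type*} [Group G] {A B : G} (h : A * B * A = B * A * B) :
    B⁻¹ * A⁻¹ * B⁻¹ = A⁻¹ * B⁻¹ * A⁻¹ := by
  have : (B * A * B)⁻¹ = (A * B * A)⁻¹ := by rw [h]
  calc B⁻¹ * A⁻¹ * B⁻¹ = (B * A * B)⁻¹ := by group
    _ = (A * B * A)⁻¹ := this
    _ = A⁻¹ * B⁻¹ * A⁻¹ := by group

-- monoid versions
private lemma mbraid₁ {M : Type*} [Monoid M] {a b a' b' : M}
    (ha : a * a' = 1) (ha2 : a' * a = 1) (hb : b * b' = 1) (hb2 : b' * b = 1)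
    (h : a * b * a = b * a * b) : b * a' * b' = a' * b' * a := by
  let A : Mˣ := ⟨a, a', ha, ha2⟩
  let B : Mˣ := ⟨b, b', hb, hb2⟩
  have hU : A * B * A = B * A * B := Units.ext (by exact h)
  have := gbraid₁ hU
  have hval := congrArg Units.val this
  exact hval

private lemma mbraid₂ {M : Type*} [Monoid M] {a b a' b' : M}
    (ha : a * a' = 1) (ha2 : a' * a = 1) (hb : b * b' = 1) (hb2 : b' * b = 1)
    (h : a * b * a = b * a * b) : b' * a' * b' = a' * b' * a' := by
  let A : Mˣ := ⟨a, a', ha, ha2⟩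
  let B : Mˣ := ⟨b, b', hb, hb2⟩
  have hU : A * B * A = B * A * B := Units.ext (by exact h)
  have := gbraid₂ hU
  have hval := congrArg Units.val this
  exact hval

/-- braid variant with one inverse: b * a⁻¹ * b⁻¹ = a⁻¹ * b⁻¹ * a for adjacent valid indices -/
lemma braid_inv₁ {i : ℤ} (hi : validIdx m n i) (hi1 : validIdx m n (i + 1)) :
    Htil m n (i+1) * Htilinv m n i * Htilinv m n (i+1)
      = Htilinv m n i * Htilinv m n (i+1) * Htil m n i :=
  mbraid₁ (Htil_mul_Htilinv i) (Htilinv_mul_Htil i) (Htil_mul_Htilinv (i+1))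
    (Htilinv_mul_Htil (i+1)) (braid_eq hi hi1)

lemma braid_inv₂ {i : ℤ} (hi : validIdx m n i) (hi1 : validIdx m n (i + 1)) :
    Htilinv m n (i+1) * Htilinv m n i * Htilinv m n (i+1)
      = Htilinv m n i * Htilinv m n (i+1) * Htilinv m n i :=
  mbraid₂ (Htil_mul_Htilinv i) (Htilinv_mul_Htil i) (Htil_mul_Htilinv (i+1))
    (Htilinv_mul_Htil (i+1)) (braid_eq hi hi1)

end Aux2
-- chunk 3: products and shifts
section Aux3
variable {m n : ℕ}

/-- helper: left-commute under right association -/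
lemma lcomm {a b : WB m n} (h : Commute a b) (c : WB m n) :
    a * (b * c) = b * (a * c) := by rw [← mul_assoc, h.eq, mul_assoc]

/-- helper: rewrite a triple product at the head of a right-associated chain -/
lemma triple {a b c d e f : WB m n} (h : a * b * c = d * e * f) (w : WB m n) :
    a * (b * (c * w)) = d * (e * (f * w)) := by
  rw [← mul_assoc, ← mul_assoc, h, mul_assoc, mul_assoc]

def AP (m n : ℕ) (s k : ℕ) : WB m n :=
  ((List.range k).map (fun j => Htilinv m n (-((s + j + 1 : ℕ) : ℤ)))).prod

def BP (m n : ℕ) (s k : ℕ) : WB m n :=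
  ((List.range k).map (fun j => Htil m n ((s + j + 1 : ℕ) : ℤ))).prod

lemma ek_succ (k : ℕ) :
    ek m n (k+1) = EB m n * AP m n 0 k * BP m n 0 k * ek m n k := by
  show EB m n * _ * _ * ek m n k = _
  unfold AP BP
  simp only [Nat.zero_add]

lemma AP_zero (s : ℕ) : AP m n s 0 = 1 := rfl
lemma BP_zero (s : ℕ) : BP m n s 0 = 1 := rfl

lemma AP_one (s : ℕ) : AP m n s 1 = Htilinv m n (-((s + 1 : ℕ) : ℤ)) := by
  unfold AP
  rw [show List.range 1 = [0] from rfl]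
  simp

lemma BP_one (s : ℕ) : BP m n s 1 = Htil m n ((s + 1 : ℕ) : ℤ) := by
  unfold BP
  rw [show List.range 1 = [0] from rfl]
  simp

lemma AP_succ_right (s k : ℕ) :
    AP m n s (k+1) = AP m n s k * Htilinv m n (-((s + k + 1 : ℕ) : ℤ)) := by
  unfold AP
  rw [List.range_succ, List.map_append, List.prod_append]
  simp

lemma BP_succ_right (s k : ℕ) :
    BP m n s (k+1) = BP m n s k * Htil m n ((s + k + 1 : ℕ) : ℤ) := by
  unfold BP
  rw [List.range_succ, List.map_append, List.prod_append]
  simp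

lemma AP_split (s a b : ℕ) : AP m n s (a + b) = AP m n s a * AP m n (s + a) b := by
  induction b with
  | zero => rw [AP_zero, mul_one]; rfl
  | succ b ih =>
      have h1 : a + (b+1) = (a+b)+1 := by omega
      rw [h1, AP_succ_right, ih, AP_succ_right, mul_assoc]
      congr 3
      omega

lemma BP_split (s a b : ℕ) : BP m n s (a + b) = BP m n s a * BP m n (s + a) b := by
  induction b with
  | zero => rw [BP_zero, mul_one]; rfl
  | succ b ih =>
      have h1 : a + (b+1) = (a+b)+1 := by omega
      rw [h1, BP_succ_right, ih, BP_succ_right, mul_assoc]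
      congr 3
      omega

lemma AP_succ_left (s k : ℕ) :
    AP m n s (k+1) = Htilinv m n (-((s + 1 : ℕ) : ℤ)) * AP m n (s+1) k := by
  have h : k + 1 = 1 + k := by omega
  rw [h, AP_split, AP_one]

lemma BP_succ_left (s k : ℕ) :
    BP m n s (k+1) = Htil m n ((s + 1 : ℕ) : ℤ) * BP m n (s+1) k := by
  have h : k + 1 = 1 + k := by omega
  rw [h, BP_split, BP_one]

lemma commute_AP {x : WB m n} (s k : ℕ)
    (h : ∀ j, j < k → Commute x (Htilinv m n (-((s + j + 1 : ℕ) : ℤ)))) :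
    Commute x (AP m n s k) := by
  unfold AP
  apply Commute.list_prod_right
  intro y hy
  simp only [List.mem_map, List.mem_range] at hy
  obtain ⟨j, hj, rfl⟩ := hy
  exact h j hj

lemma commute_BP {x : WB m n} (s k : ℕ)
    (h : ∀ j, j < k → Commute x (Htil m n ((s + j + 1 : ℕ) : ℤ))) :
    Commute x (BP m n s k) := by
  unfold BP
  apply Commute.list_prod_right
  intro y hy
  simp only [List.mem_map, List.mem_range] at hy
  obtain ⟨j, hj, rfl⟩ := hy
  exact h j hj

lemma commute_Htil_AP {a : ℤ} (s k : ℕ)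
    (h : ∀ j, j < k → 2 ≤ |a + ((s + j + 1 : ℕ) : ℤ)|) :
    Commute (Htil m n a) (AP m n s k) :=
  commute_AP s k fun j hj => commute_Htilinv_right
    (commute_Htil_Htil (by rw [sub_neg_eq_add]; exact h j hj))

lemma commute_Htil_BP {a : ℤ} (s k : ℕ)
    (h : ∀ j, j < k → 2 ≤ |a - ((s + j + 1 : ℕ) : ℤ)|) :
    Commute (Htil m n a) (BP m n s k) :=
  commute_BP s k fun j hj => commute_Htil_Htil (h j hj)

lemma commute_Htilinv_left {a : ℤ} {x : WB m n} (h : Commute (Htil m n a) x) :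
    Commute (Htilinv m n a) x := (commute_Htilinv_right h.symm).symm

lemma commute_E_AP (s k : ℕ) (hs : 1 ≤ s) : Commute (EB m n) (AP m n s k) :=
  commute_AP s k fun j _ => commute_Htilinv_right
    (commute_E_Htil (by simp only [Int.abs_eq_natAbs]; omega))

lemma commute_E_BP (s k : ℕ) (hs : 1 ≤ s) : Commute (EB m n) (BP m n s k) :=
  commute_BP s k fun j _ => commute_E_Htil (by simp only [Int.abs_eq_natAbs]; omega)

/-- negative-index generators commute with positive-index products -/
lemma commute_Hneg_BP (r : ℕ) (hr : 1 ≤ r) (s k : ℕ) :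
    Commute (Htil m n (-(r : ℤ))) (BP m n s k) :=
  commute_Htil_BP s k fun j _ => by simp only [Int.abs_eq_natAbs]; omega

lemma commute_AP_BP (s k s' k' : ℕ) : Commute (AP m n s k) (BP m n s' k') := by
  apply commute_BP
  intro j hj
  exact (commute_Htil_AP s k (fun j' _ => by simp only [Int.abs_eq_natAbs]; omega)).symm

end Aux3
-- chunk 4: shifts and u-lemma
section Aux4
variable {m n : ℕ}

lemma validNeg (r : ℕ) (h1 : 1 ≤ r) (h2 : (r : ℤ) ≤ (m : ℤ) - 1) :
    validIdx m n (-(r : ℤ)) := Or.inr ⟨by omega, by omega⟩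

lemma validPos (r : ℕ) (h1 : 1 ≤ r) (h2 : (r : ℤ) ≤ (n : ℤ) - 1) :
    validIdx m n ((r : ℤ)) := Or.inl ⟨by omega, by omega⟩

lemma Htilinv_eq_sub {i : ℤ} (h : validIdx m n i) :
    Htilinv m n i = Htil m n i - algebraMap KK (WB m n) (qv - qv⁻¹) := by
  rw [Htilinv_valid h, Htil_valid h]; rfl

lemma braid_neg (p : ℕ) (h2 : (p : ℤ) + 2 ≤ (m : ℤ) - 1) :
    Htil m n (-((p+2:ℕ):ℤ)) * Htilinv m n (-((p+1:ℕ):ℤ)) * Htilinv m n (-((p+2:ℕ):ℤ))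
      = Htilinv m n (-((p+1:ℕ):ℤ)) * Htilinv m n (-((p+2:ℕ):ℤ)) * Htil m n (-((p+1:ℕ):ℤ)) := by
  have hi : validIdx m n (-((p+2:ℕ):ℤ)) := validNeg (p+2) (by omega) (by push_cast; omega)
  have hi1 : validIdx m n (-((p+2:ℕ):ℤ) + 1) := by
    have : (-((p+2:ℕ):ℤ) + 1) = -((p+1:ℕ):ℤ) := by push_cast; ring
    rw [this]
    exact validNeg (p+1) (by omega) (by push_cast; omega)
  have hb := braid_eq (m := m) (n := n) hi hi1
  have hcast : (-((p+2:ℕ):ℤ) + 1) = -((p+1:ℕ):ℤ) := by push_cast; ring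
  rw [hcast] at hb
  exact mbraid₁ (Htil_mul_Htilinv _) (Htilinv_mul_Htil _) (Htil_mul_Htilinv _)
    (Htilinv_mul_Htil _) hb.symm

lemma braid_neg_inv (p : ℕ) (h2 : (p : ℤ) + 2 ≤ (m : ℤ) - 1) :
    Htilinv m n (-((p+2:ℕ):ℤ)) * Htilinv m n (-((p+1:ℕ):ℤ)) * Htilinv m n (-((p+2:ℕ):ℤ))
      = Htilinv m n (-((p+1:ℕ):ℤ)) * Htilinv m n (-((p+2:ℕ):ℤ)) * Htilinv m n (-((p+1:ℕ):ℤ)) := by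
  have hi : validIdx m n (-((p+2:ℕ):ℤ)) := validNeg (p+2) (by omega) (by push_cast; omega)
  have hcast : (-((p+2:ℕ):ℤ) + 1) = -((p+1:ℕ):ℤ) := by push_cast; ring
  have hi1 : validIdx m n (-((p+2:ℕ):ℤ) + 1) := by
    rw [hcast]; exact validNeg (p+1) (by omega) (by push_cast; omega)
  have hb := braid_eq (m := m) (n := n) hi hi1
  rw [hcast] at hb
  exact mbraid₂ (Htil_mul_Htilinv _) (Htilinv_mul_Htil _) (Htil_mul_Htilinv _)
    (Htilinv_mul_Htil _) hb.symm

lemma braid_pos (p : ℕ) (h2 : (p : ℤ) + 2 ≤ (n : ℤ) - 1) :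
    Htil m n ((p+2:ℕ):ℤ) * Htil m n ((p+1:ℕ):ℤ) * Htil m n ((p+2:ℕ):ℤ)
      = Htil m n ((p+1:ℕ):ℤ) * Htil m n ((p+2:ℕ):ℤ) * Htil m n ((p+1:ℕ):ℤ) := by
  have hi : validIdx m n ((p+1:ℕ):ℤ) := validPos (p+1) (by omega) (by push_cast; omega)
  have hcast : (((p+1:ℕ):ℤ) + 1) = ((p+2:ℕ):ℤ) := by push_cast; ring
  have hi1 : validIdx m n (((p+1:ℕ):ℤ) + 1) := by
    rw [hcast]; exact validPos (p+2) (by omega) (by push_cast; omega)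
  have hb := braid_eq (m := m) (n := n) hi hi1
  rw [hcast] at hb
  exact hb.symm

lemma AP_head (p q : ℕ) :
    AP m n 0 (p+q+2) = AP m n 0 p *
      (Htilinv m n (-((p+1:ℕ):ℤ)) * (Htilinv m n (-((p+2:ℕ):ℤ)) * AP m n (p+2) q)) := by
  have h1 : p+q+2 = p + ((q+1)+1) := by omega
  rw [h1, AP_split]
  rw [show (0:ℕ)+p = p from by omega]
  rw [AP_succ_left, AP_succ_left]

lemma BP_head (p q : ℕ) :
    BP m n 0 (p+q+2) = BP m n 0 p *
      (Htil m n ((p+1:ℕ):ℤ) * (Htil m n ((p+2:ℕ):ℤ) * BP m n (p+2) q)) := by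
  have h1 : p+q+2 = p + ((q+1)+1) := by omega
  rw [h1, BP_split]
  rw [show (0:ℕ)+p = p from by omega]
  rw [BP_succ_left, BP_succ_left]

lemma shiftA_Htil (p q : ℕ) (hm2 : ((p+q+2:ℕ):ℤ) ≤ (m:ℤ) - 1) :
    Htil m n (-((p+2:ℕ):ℤ)) * AP m n 0 (p+q+2)
      = AP m n 0 (p+q+2) * Htil m n (-((p+1:ℕ):ℤ)) := by
  have c1 : Commute (Htil m n (-((p+2:ℕ):ℤ))) (AP m n 0 p) :=
    commute_Htil_AP 0 p (fun j hj => by simp only [Int.abs_eq_natAbs]; omega)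
  have c2 : Commute (Htil m n (-((p+1:ℕ):ℤ))) (AP m n (p+2) q) :=
    commute_Htil_AP (p+2) q (fun j hj => by simp only [Int.abs_eq_natAbs]; omega)
  have hbr := braid_neg (m := m) (n := n) p (by push_cast at hm2 ⊢; omega)
  rw [AP_head]
  calc Htil m n (-((p+2:ℕ):ℤ)) * (AP m n 0 p *
        (Htilinv m n (-((p+1:ℕ):ℤ)) * (Htilinv m n (-((p+2:ℕ):ℤ)) * AP m n (p+2) q)))
      = AP m n 0 p * (Htil m n (-((p+2:ℕ):ℤ)) *
        (Htilinv m n (-((p+1:ℕ):ℤ)) * (Htilinv m n (-((p+2:ℕ):ℤ)) * AP m n (p+2) q))) :=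
        lcomm c1 _
    _ = AP m n 0 p * (Htilinv m n (-((p+1:ℕ):ℤ)) * (Htilinv m n (-((p+2:ℕ):ℤ)) *
        (Htil m n (-((p+1:ℕ):ℤ)) * AP m n (p+2) q))) := by rw [triple hbr]
    _ = AP m n 0 p * (Htilinv m n (-((p+1:ℕ):ℤ)) * (Htilinv m n (-((p+2:ℕ):ℤ)) *
        (AP m n (p+2) q * Htil m n (-((p+1:ℕ):ℤ))))) := by rw [c2.eq]
    _ = AP m n 0 p * (Htilinv m n (-((p+1:ℕ):ℤ)) * (Htilinv m n (-((p+2:ℕ):ℤ)) *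
        AP m n (p+2) q)) * Htil m n (-((p+1:ℕ):ℤ)) := by simp only [mul_assoc]

lemma shiftA_Htilinv (p q : ℕ) (hm2 : ((p+q+2:ℕ):ℤ) ≤ (m:ℤ) - 1) :
    Htilinv m n (-((p+2:ℕ):ℤ)) * AP m n 0 (p+q+2)
      = AP m n 0 (p+q+2) * Htilinv m n (-((p+1:ℕ):ℤ)) := by
  have c1 : Commute (Htilinv m n (-((p+2:ℕ):ℤ))) (AP m n 0 p) :=
    commute_Htilinv_left (commute_Htil_AP 0 p
      (fun j hj => by simp only [Int.abs_eq_natAbs]; omega))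
  have c2 : Commute (Htilinv m n (-((p+1:ℕ):ℤ))) (AP m n (p+2) q) :=
    commute_Htilinv_left (commute_Htil_AP (p+2) q
      (fun j hj => by simp only [Int.abs_eq_natAbs]; omega))
  have hbr := braid_neg_inv (m := m) (n := n) p (by push_cast at hm2 ⊢; omega)
  rw [AP_head]
  calc Htilinv m n (-((p+2:ℕ):ℤ)) * (AP m n 0 p *
        (Htilinv m n (-((p+1:ℕ):ℤ)) * (Htilinv m n (-((p+2:ℕ):ℤ)) * AP m n (p+2) q)))
      = AP m n 0 p * (Htilinv m n (-((p+2:ℕ):ℤ)) *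
        (Htilinv m n (-((p+1:ℕ):ℤ)) * (Htilinv m n (-((p+2:ℕ):ℤ)) * AP m n (p+2) q))) :=
        lcomm c1 _
    _ = AP m n 0 p * (Htilinv m n (-((p+1:ℕ):ℤ)) * (Htilinv m n (-((p+2:ℕ):ℤ)) *
        (Htilinv m n (-((p+1:ℕ):ℤ)) * AP m n (p+2) q))) := by rw [triple hbr]
    _ = AP m n 0 p * (Htilinv m n (-((p+1:ℕ):ℤ)) * (Htilinv m n (-((p+2:ℕ):ℤ)) *
        (AP m n (p+2) q * Htilinv m n (-((p+1:ℕ):ℤ))))) := by rw [c2.eq]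
    _ = AP m n 0 p * (Htilinv m n (-((p+1:ℕ):ℤ)) * (Htilinv m n (-((p+2:ℕ):ℤ)) *
        AP m n (p+2) q)) * Htilinv m n (-((p+1:ℕ):ℤ)) := by simp only [mul_assoc]

lemma shiftB_Htil (p q : ℕ) (hn2 : ((p+q+2:ℕ):ℤ) ≤ (n:ℤ) - 1) :
    Htil m n ((p+2:ℕ):ℤ) * BP m n 0 (p+q+2)
      = BP m n 0 (p+q+2) * Htil m n ((p+1:ℕ):ℤ) := by
  have c1 : Commute (Htil m n ((p+2:ℕ):ℤ)) (BP m n 0 p) :=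
    commute_Htil_BP 0 p (fun j hj => by simp only [Int.abs_eq_natAbs]; omega)
  have c2 : Commute (Htil m n ((p+1:ℕ):ℤ)) (BP m n (p+2) q) :=
    commute_Htil_BP (p+2) q (fun j hj => by simp only [Int.abs_eq_natAbs]; omega)
  have hbr := braid_pos (m := m) (n := n) p (by push_cast at hn2 ⊢; omega)
  rw [BP_head]
  calc Htil m n ((p+2:ℕ):ℤ) * (BP m n 0 p *
        (Htil m n ((p+1:ℕ):ℤ) * (Htil m n ((p+2:ℕ):ℤ) * BP m n (p+2) q)))
      = BP m n 0 p * (Htil m n ((p+2:ℕ):ℤ) *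
        (Htil m n ((p+1:ℕ):ℤ) * (Htil m n ((p+2:ℕ):ℤ) * BP m n (p+2) q))) := lcomm c1 _
    _ = BP m n 0 p * (Htil m n ((p+1:ℕ):ℤ) * (Htil m n ((p+2:ℕ):ℤ) *
        (Htil m n ((p+1:ℕ):ℤ) * BP m n (p+2) q))) := by rw [triple hbr]
    _ = BP m n 0 p * (Htil m n ((p+1:ℕ):ℤ) * (Htil m n ((p+2:ℕ):ℤ) *
        (BP m n (p+2) q * Htil m n ((p+1:ℕ):ℤ)))) := by rw [c2.eq]
    _ = BP m n 0 p * (Htil m n ((p+1:ℕ):ℤ) * (Htil m n ((p+2:ℕ):ℤ) *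
        BP m n (p+2) q)) * Htil m n ((p+1:ℕ):ℤ) := by simp only [mul_assoc]

lemma shiftA_prod (K : ℕ) (hK : (K:ℤ) ≤ (m:ℤ) - 1) (j : ℕ) (hj : j + 1 ≤ K) :
    AP m n 1 j * AP m n 0 K = AP m n 0 K * AP m n 0 j := by
  induction j with
  | zero => rw [AP_zero, one_mul, AP_zero, mul_one]
  | succ j ih =>
      obtain ⟨q, hq⟩ : ∃ q, K = j + q + 2 := ⟨K - j - 2, by omega⟩
      have hsh : Htilinv m n (-((j+2:ℕ):ℤ)) * AP m n 0 K
          = AP m n 0 K * Htilinv m n (-((j+1:ℕ):ℤ)) := by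
        rw [hq]; exact shiftA_Htilinv j q (by rw [hq] at hK; exact hK)
      rw [AP_succ_right]
      rw [show (1:ℕ)+j+1 = j+2 from by omega]
      rw [mul_assoc, hsh, ← mul_assoc, ih (by omega), mul_assoc]
      rw [AP_succ_right 0 j]
      rw [show (0:ℕ)+j+1 = j+1 from by omega]

lemma shiftB_prod (K : ℕ) (hK : (K:ℤ) ≤ (n:ℤ) - 1) (j : ℕ) (hj : j + 1 ≤ K) :
    BP m n 1 j * BP m n 0 K = BP m n 0 K * BP m n 0 j := by
  induction j with
  | zero => rw [BP_zero, one_mul, BP_zero, mul_one]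
  | succ j ih =>
      obtain ⟨q, hq⟩ : ∃ q, K = j + q + 2 := ⟨K - j - 2, by omega⟩
      have hsh : Htil m n ((j+2:ℕ):ℤ) * BP m n 0 K
          = BP m n 0 K * Htil m n ((j+1:ℕ):ℤ) := by
        rw [hq]; exact shiftB_Htil j q (by rw [hq] at hK; exact hK)
      rw [BP_succ_right]
      rw [show (1:ℕ)+j+1 = j+2 from by omega]
      rw [mul_assoc, hsh, ← mul_assoc, ih (by omega), mul_assoc]
      rw [BP_succ_right 0 j]
      rw [show (0:ℕ)+j+1 = j+1 from by omega]

lemma u_htil (h1 : validIdx m n 1) (hm1 : validIdx m n (-1)) :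
    EB m n * Htilinv m n (-1) * Htil m n 1 * EB m n * Htil m n (-1)
      = EB m n * Htilinv m n (-1) * Htil m n 1 * EB m n * Htil m n 1 := by
  have h0 := mk_rel (WBrel.rel7 h1 hm1 (m := m) (n := n))
  simp only [map_mul] at h0
  have hinv : RingQuot.mkAlgHom KK (WBrel m n) (fHinv m n (-1) hm1) = HBinv m n (-1) hm1 := by
    unfold fHinv HBinv HB
    rw [map_sub, AlgHom.commutes]
  rw [hinv] at h0
  rw [Htilinv_valid hm1, Htil_valid h1, Htil_valid hm1]
  exact h0

lemma u_lemma (h1 : validIdx m n 1) (hm1 : validIdx m n (-1)) :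
    EB m n * Htilinv m n (-1) * Htil m n 1 * EB m n * Htilinv m n (-1)
      = EB m n * Htilinv m n (-1) * Htil m n 1 * EB m n * Htilinv m n 1 := by
  set u := EB m n * Htilinv m n (-1) * Htil m n 1 * EB m n with hu
  set c : WB m n := algebraMap KK (WB m n) (qv - qv⁻¹) with hc
  calc u * Htilinv m n (-1) = u * (Htil m n (-1) - c) := by rw [Htilinv_eq_sub hm1]
    _ = u * Htil m n (-1) - u * c := mul_sub u (Htil m n (-1)) c
    _ = u * Htil m n 1 - u * c := by rw [u_htil h1 hm1]
    _ = u * (Htil m n 1 - c) := (mul_sub u (Htil m n 1) c).symm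
    _ = u * Htilinv m n 1 := by rw [← Htilinv_eq_sub h1]

lemma commute_Hneg_ek (j l : ℕ) (h : l + 1 ≤ j) :
    Commute (Htil m n (-(j:ℤ))) (ek m n l) := by
  induction l with
  | zero => exact Commute.one_right _
  | succ l ih =>
      rw [ek_succ]
      apply Commute.mul_right
      apply Commute.mul_right
      apply Commute.mul_right
      · exact (commute_E_Htil (by simp only [Int.abs_eq_natAbs]; omega)).symm
      · exact commute_Htil_AP 0 l (fun j' hj' => by simp only [Int.abs_eq_natAbs]; omega)
      · exact commute_Hneg_BP j (by omega) 0 l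
      · exact ih (by omega)

end Aux4
-- chunk 5: assoc helpers and cons forms
section Aux5
variable {m n : ℕ}

lemma rcomm {a b : WB m n} (h : Commute a b) (x : WB m n) :
    x * a * b = x * b * a := by rw [mul_assoc, h.eq, ← mul_assoc]

lemma mid {x a b c d : WB m n} (h : a * b = c * d) : x * a * b = x * c * d := by
  rw [mul_assoc, h, ← mul_assoc]

lemma tail2 {x a b c : WB m n} (h : a * b = c) : x * a * b = x * c := by
  rw [mul_assoc, h]

lemma tail4 {x a b c d e : WB m n} (h : a * b * c * d = e) :
    x * a * b * c * d = x * e := by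
  rw [← h]; simp only [mul_assoc]

lemma tail5 {x a b c d e f : WB m n} (h : a * b * c * d * e = f) :
    x * a * b * c * d * e = x * f := by
  rw [← h]; simp only [mul_assoc]

lemma central_dA (x y : WB m n) : x * (dA m n * y) = dA m n * (x * y) := by
  unfold dA
  rw [← mul_assoc, ← amap_central, mul_assoc]

lemma central_tA (x y : WB m n) : x * (tA m n * y) = tA m n * (x * y) := by
  unfold tA
  rw [← mul_assoc, ← amap_central, mul_assoc]

lemma dA_pow_eq (j : ℕ) : dA m n ^ j = algebraMap KK (WB m n) (((tv - tv⁻¹) / (qv - qv⁻¹)) ^ j) := by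
  rw [map_pow]; rfl

lemma central_pow (j : ℕ) (x y : WB m n) :
    x * (dA m n ^ j * y) = dA m n ^ j * (x * y) := by
  rw [dA_pow_eq, ← mul_assoc, ← amap_central, mul_assoc]

lemma AP_cons (j : ℕ) : AP m n 0 (j+1) = Htilinv m n (-1) * AP m n 1 j := by
  rw [AP_succ_left]; norm_num

lemma BP_cons (j : ℕ) : BP m n 0 (j+1) = Htil m n 1 * BP m n 1 j := by
  rw [BP_succ_left]; norm_num

lemma cAg (j : ℕ) : Commute (AP m n 1 j) (Htil m n 1) :=
  ((commute_Htil_AP 1 j (fun j' _ => by simp only [Int.abs_eq_natAbs]; omega)).symm)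

lemma ek_build (K' : ℕ) :
    EB m n * Htilinv m n (-1) * Htil m n 1 * AP m n 1 K' * BP m n 1 K' * ek m n (K'+1)
      = ek m n (K'+1+1) := by
  rw [ek_succ (K'+1), AP_cons K', BP_cons K']
  simp only [← mul_assoc]
  rw [rcomm (cAg K')]

lemma uAB (K' : ℕ) (h1 : validIdx m n 1) (hm1 : validIdx m n (-1)) :
    EB m n * Htilinv m n (-1) * Htil m n 1 * EB m n * AP m n 0 (K'+1) * BP m n 0 (K'+1)
      = EB m n * Htilinv m n (-1) * Htil m n 1 * EB m n * AP m n 1 K' * BP m n 1 K' := by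
  rw [AP_cons K', BP_cons K']
  simp only [← mul_assoc]
  rw [rcomm (cAg K')]
  rw [u_lemma h1 hm1]
  rw [tail2 (Htilinv_mul_Htil 1)]
  rw [mul_one]

end Aux5
-- chunk 6: main induction lemmas
section Aux6
variable {m n : ℕ}

lemma lemN : ∀ (j K : ℕ), j ≤ K → K + 1 ≤ min m n →
    EB m n * AP m n 0 j * BP m n 0 j * ek m n (K+1) = dA m n * ek m n (K+1) := by
  intro j
  induction j with
  | zero =>
      intro K _ _
      rw [AP_zero, BP_zero, mul_one, mul_one, ek_succ K]
      simp only [← mul_assoc]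
      rw [esq_eq]
  | succ j ih =>
      intro K hjK hK
      obtain ⟨K', rfl⟩ : ∃ K', K = K'+1 := ⟨K - 1, by omega⟩
      have hmm : K'+1+1 ≤ m := le_trans hK (min_le_left m n)
      have hnn : K'+1+1 ≤ n := le_trans hK (min_le_right m n)
      have hv1 : validIdx m n 1 := validPos 1 (by omega) (by omega)
      have hvm1 : validIdx m n (-1) := by
        have := validNeg (m := m) (n := n) 1 (by omega) (by omega)
        norm_num at this
        exact this
      rw [AP_cons j, BP_cons j]
      simp only [← mul_assoc]
      rw [rcomm (cAg j)]
      rw [ek_succ (K'+1)]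
      simp only [← mul_assoc]
      rw [rcomm ((commute_E_BP 1 j (le_refl 1)).symm)]
      rw [rcomm ((commute_E_AP 1 j (le_refl 1)).symm)]
      rw [rcomm ((commute_AP_BP 0 (K'+1) 1 j).symm)]
      rw [mid (shiftA_prod (K'+1) (by push_cast; omega) j (by omega))]
      rw [mid (shiftB_prod (K'+1) (by push_cast; omega) j (by omega))]
      rw [rcomm (commute_AP_BP 0 j 0 (K'+1))]
      rw [uAB K' hv1 hvm1]
      rw [rcomm (commute_E_AP 1 K' (le_refl 1))]
      rw [rcomm (commute_E_BP 1 K' (le_refl 1))]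
      rw [tail4 (ih K' (by omega) (by omega))]
      rw [central_dA]
      rw [ek_build K']
      rw [ek_succ (K'+1)]
      simp only [← mul_assoc]

end Aux6
-- chunk 7: lemG
section Aux7
variable {m n : ℕ}

lemma lemG : ∀ (i K : ℕ), i + 1 ≤ K → K + 1 ≤ min m n →
    EB m n * AP m n 0 i * Htil m n (-((i+1:ℕ):ℤ)) * BP m n 0 i * ek m n (K+1)
      = tA m n * ek m n (K+1) := by
  intro i
  induction i with
  | zero =>
      intro K hiK hK
      have hmm : K+1 ≤ m := le_trans hK (min_le_left m n)
      have hvm1 : validIdx m n (-1) := by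
        have := validNeg (m := m) (n := n) 1 (by omega) (by omega)
        norm_num at this
        exact this
      rw [AP_zero, BP_zero, mul_one, mul_one]
      rw [show (-((0+1:ℕ):ℤ)) = (-1 : ℤ) from by norm_num]
      rw [ek_succ K]
      simp only [← mul_assoc]
      rw [eHe_eq hvm1 (Or.inr rfl)]
  | succ i ih =>
      intro K hiK hK
      obtain ⟨K', rfl⟩ : ∃ K', K = K'+1 := ⟨K - 1, by omega⟩
      have hmm : K'+1+1 ≤ m := le_trans hK (min_le_left m n)
      have hnn : K'+1+1 ≤ n := le_trans hK (min_le_right m n)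
      have hv1 : validIdx m n 1 := validPos 1 (by omega) (by omega)
      have hvm1 : validIdx m n (-1) := by
        have := validNeg (m := m) (n := n) 1 (by omega) (by omega)
        norm_num at this
        exact this
      rw [show ((i+1+1:ℕ)) = i+2 from by omega]
      rw [AP_cons i, BP_cons i]
      simp only [← mul_assoc]
      -- E*iv1*AP1i*Hng*g1*BP1i*ek(K+1)
      rw [rcomm (commute_Htil_Htil (a := -((i+2:ℕ):ℤ)) (b := 1)
        (by simp only [Int.abs_eq_natAbs]; omega))]
      -- E*iv1*AP1i*g1*Hng*BP1i*ek
      rw [rcomm (cAg i)]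
      -- E*iv1*g1*AP1i*Hng*BP1i*ek
      rw [ek_succ (K'+1)]
      simp only [← mul_assoc]
      -- E*iv1*g1*AP1i*Hng*BP1i*E*AP0K*BP0K*ekK
      rw [rcomm ((commute_E_BP 1 i (le_refl 1)).symm)]
      rw [rcomm ((commute_E_Htil (a := -((i+2:ℕ):ℤ))
        (by simp only [Int.abs_eq_natAbs]; omega)).symm)]
      rw [rcomm ((commute_E_AP 1 i (le_refl 1)).symm)]
      -- E*iv1*g1*E*AP1i*Hng*BP1i*AP0K*BP0K*ekK
      rw [rcomm ((commute_AP_BP 0 (K'+1) 1 i).symm)]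
      -- E*iv1*g1*E*AP1i*Hng*AP0K*BP1i*BP0K*ekK
      have hsh : Htil m n (-((i+2:ℕ):ℤ)) * AP m n 0 (K'+1)
          = AP m n 0 (K'+1) * Htil m n (-((i+1:ℕ):ℤ)) := by
        obtain ⟨q, hq⟩ : ∃ q, K'+1 = i + q + 2 := ⟨K' - 1 - i, by omega⟩
        rw [hq]
        exact shiftA_Htil i q (by rw [← hq]; push_cast; omega)
      rw [mid hsh]
      -- E*iv1*g1*E*AP1i*AP0K*Hng'*BP1i*BP0K*ekK
      rw [mid (shiftA_prod (K'+1) (by push_cast; omega) i (by omega))]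
      -- E*iv1*g1*E*AP0K*AP0i*Hng'*BP1i*BP0K*ekK
      rw [mid (shiftB_prod (K'+1) (by push_cast; omega) i (by omega))]
      -- E*iv1*g1*E*AP0K*AP0i*Hng'*BP0K*BP0i*ekK
      rw [rcomm (commute_Hneg_BP (i+1) (by omega) 0 (K'+1))]
      -- E*iv1*g1*E*AP0K*AP0i*BP0K*Hng'*BP0i*ekK
      rw [rcomm (commute_AP_BP 0 i 0 (K'+1))]
      -- E*iv1*g1*E*AP0K*BP0K*AP0i*Hng'*BP0i*ekK
      rw [uAB K' hv1 hvm1]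
      rw [rcomm (commute_E_AP 1 K' (le_refl 1))]
      rw [rcomm (commute_E_BP 1 K' (le_refl 1))]
      -- E*iv1*g1*AP1K'*BP1K'*E*AP0i*Hng'*BP0i*ekK
      rw [tail5 (ih K' (by omega) (by omega))]
      rw [central_tA]
      rw [ek_build K']
      rw [ek_succ (K'+1)]
      simp only [← mul_assoc]

end Aux7
-- chunk 8: lemM
section Aux8
variable {m n : ℕ}

lemma lemM : ∀ (j k : ℕ), j ≤ k → k ≤ min m n →
    ek m n j * ek m n k = dA m n ^ j * ek m n k := by
  intro j
  induction j with
  | zero =>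
      intro k _ _
      show (1 : WB m n) * ek m n k = _
      rw [pow_zero, one_mul]
  | succ j ih =>
      intro k hjk hk
      obtain ⟨K, rfl⟩ : ∃ K, k = K+1 := ⟨k - 1, by omega⟩
      rw [ek_succ j]
      rw [mul_assoc (EB m n * AP m n 0 j * BP m n 0 j) (ek m n j) (ek m n (K+1))]
      rw [ih (K+1) (by omega) hk]
      rw [central_pow j]
      rw [lemN j K (by omega) hk]
      rw [pow_succ, mul_assoc]

end Aux8

theorem ei_HH_ek (m n : ℕ) (hm : 1 ≤ m) (hn : 1 ≤ n) (i k : ℕ)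
    (hi : 1 ≤ i) (hik : i + 1 ≤ k) (hk : k ≤ min m n)
    (him : (i : ℤ) + 1 ≤ (m : ℤ) - 1) :
    ek m n i * Htil m n (-((i : ℤ) + 1)) * Htil m n (-(i : ℤ)) * ek m n k =
      algebraMap KK (WB m n) (tv * ((tv - tv⁻¹) / (qv - qv⁻¹)) ^ (i - 1)) *
        (Htil m n (-((i : ℤ) + 1)) * ek m n k) := by
  obtain ⟨i', rfl⟩ : ∃ i', i = i'+1 := ⟨i - 1, by omega⟩
  obtain ⟨K, rfl⟩ : ∃ K, k = K+1 := ⟨k - 1, by omega⟩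
  have e1 : -(((i'+1:ℕ):ℤ) + 1) = -(((i'+2:ℕ)):ℤ) := by push_cast; ring
  rw [e1]
  rw [show ((i'+1) - 1 : ℕ) = i' from by omega]
  rw [ek_succ i']
  simp only [← mul_assoc]
  rw [rcomm ((commute_Hneg_ek (i'+2) i' (by omega)).symm)]
  rw [rcomm ((commute_Hneg_ek (i'+1) i' (by omega)).symm)]
  rw [rcomm ((commute_Hneg_BP (i'+2) (by omega) 0 i').symm)]
  rw [rcomm ((commute_Htil_AP (a := -((i'+2:ℕ):ℤ)) 0 i'
    (fun j' hj' => by simp only [Int.abs_eq_natAbs]; omega)).symm)]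
  rw [(commute_E_Htil (a := -((i'+2:ℕ):ℤ))
    (by simp only [Int.abs_eq_natAbs]; omega)).eq]
  rw [rcomm ((commute_Hneg_BP (i'+1) (by omega) 0 i').symm)]
  rw [tail2 (lemM i' (K+1) (by omega) hk)]
  rw [central_pow i']
  rw [tail5 (lemG i' K (by omega) hk)]
  rw [central_tA]
  have hsc : dA m n ^ i' * tA m n
      = algebraMap KK (WB m n) (tv * ((tv - tv⁻¹) / (qv - qv⁻¹)) ^ i') := by
    unfold dA tA
    rw [← map_pow, ← map_mul, mul_comm]
  simp only [← mul_assoc]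
  rw [hsc]
end
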